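/- arXiv:0710.0261 — 2 statements merged into one kernel-verified Lean document; each statement's English description precedes it below -/
import Mathlib

section
/- The matrix C(q) = Σ_{p=2}^{k+2} (1/(p-1)_q) e_{p,p} - Σ_{p=2}^{k+1} (1/(p)_q) e_{p,p+1} is invertible (it is upper triangular with nonzero diagonal entries 1/(p-1)_q), so H_{(k,1)}(q) is similar to H^∞ = Σ_{p=2}^{k+1}(e_{p,p+1}+e_{p+1,p}); in particular the spectrum of H_{(k,1)}(q) is independent of q. -/
open Finset Matrix

/-- The `q`-number `(m)_q = (q^m - q^{-m})/(q - q^{-1})`. -/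
noncomputable def qnum (q : ℂ) (m : ℕ) : ℂ := (q ^ m - q⁻¹ ^ m) / (q - q⁻¹)

/-- The matrix unit `e_{i,j}` on the span of `v_2, ..., v_{k+2}` (zero if a label lies
outside `{2, ..., k+2}`); `v_{a+2}` corresponds to the index `a : Fin (k+1)`. -/
def E (k i j : ℕ) : Matrix (Fin (k+1)) (Fin (k+1)) ℂ :=
  Matrix.of fun a b => if (a : ℕ) + 2 = i ∧ (b : ℕ) + 2 = j then 1 else 0

/-- The corner representation `ρ_{(k,1)}` of the Hecke algebra `H_{k+2}`. -/
noncomputable def rho (k : ℕ) (q : ℂ) (p : ℕ) : Matrix (Fin (k+1)) (Fin (k+1)) ℂ :=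
  q • 1 + (qnum q (p-1) / qnum q p) • (E k p (p+1) - E k p p)
        + (qnum q (p+1) / qnum q p) • (E k (p+1) p - E k (p+1) (p+1))

/-- The traceless Hamiltonian `H_{(k,1)}(q)`. -/
noncomputable def HH (k : ℕ) (q : ℂ) : Matrix (Fin (k+1)) (Fin (k+1)) ℂ :=
  (∑ p ∈ Finset.Icc 2 (k+1),
      ((qnum q (p+1) / qnum q p) • E k p (p+1) + (qnum q (p-1) / qnum q p) • E k (p+1) p
        - (1 / (qnum q p * qnum q (p-1))) • E k p p))
    + (qnum q k / qnum q (k+1)) • E k (k+2) (k+2)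

/-- The upper triangular matrix `C(q)`. -/
noncomputable def Cmat (k : ℕ) (q : ℂ) : Matrix (Fin (k+1)) (Fin (k+1)) ℂ :=
  (∑ p ∈ Finset.Icc 2 (k+2), (qnum q (p-1))⁻¹ • E k p p)
    - (∑ p ∈ Finset.Icc 2 (k+1), (qnum q p)⁻¹ • E k p (p+1))

/-- The `q → ∞` limit Hamiltonian `H^∞ = Σ_{p=2}^{k+1} (e_{p,p+1} + e_{p+1,p})`,
the adjacency matrix of the path (type `A`) Dynkin diagram. -/
noncomputable def Hinf (k : ℕ) : Matrix (Fin (k+1)) (Fin (k+1)) ℂ :=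
  ∑ p ∈ Finset.Icc 2 (k+1), (E k p (p+1) + E k (p+1) p)


set_option maxHeartbeats 1000000

noncomputable def HHf (k : ℕ) (q : ℂ) (A B : ℕ) : ℂ :=
  if B = A+1 then qnum q (A+3) / qnum q (A+2)
  else if A = B+1 then qnum q (B+1) / qnum q (B+2)
  else if A = B then
    (if A = k then qnum q k / qnum q (k+1)
     else -(1/(qnum q (A+2) * qnum q (A+1))))
  else 0

noncomputable def Hf (A B : ℕ) : ℂ := if B = A+1 ∨ A = B+1 then 1 else 0

lemma qnum_id (q : ℂ) (hq : q ≠ 0) (hd : q - q⁻¹ ≠ 0) (m : ℕ) :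
    qnum q (m+1) ^ 2 = qnum q m * qnum q (m+2) + 1 := by
  have hm : q ^ m * q⁻¹ ^ m = 1 := by rw [← mul_pow, mul_inv_cancel₀ hq, one_pow]
  have key : (q^(m+1) - q⁻¹^(m+1))^2
      = (q^m - q⁻¹^m)*(q^(m+2) - q⁻¹^(m+2)) + (q - q⁻¹)^2 := by
    linear_combination (q - q⁻¹)^2 * hm
  simp only [qnum]
  rw [div_pow, div_mul_div_comm, key, ← pow_two, add_div, div_self (pow_ne_zero 2 hd)]



lemma sum_if_icc (s : Finset ℕ) (c : ℕ) (P : Prop) [Decidable P] (v : ℕ → ℂ) :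
    ∑ p ∈ s, (if p = c ∧ P then v p else 0) = if c ∈ s ∧ P then v c else 0 := by
  by_cases hP : P
  · simp only [hP, and_true, Finset.sum_ite_eq' s c v]
  · simp [hP]

lemma Cmat_apply (k : ℕ) (q : ℂ) (a b : Fin (k+1)) :
    Cmat k q a b = (if (b:ℕ) = (a:ℕ) then (qnum q ((a:ℕ)+1))⁻¹ else 0)
      - (if (b:ℕ) = (a:ℕ)+1 then (qnum q ((a:ℕ)+2))⁻¹ else 0) := by
  unfold Cmat
  simp only [Matrix.sub_apply, Matrix.sum_apply, Matrix.smul_apply, E, Matrix.of_apply,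
    smul_eq_mul, mul_ite, mul_one, mul_zero]
  congr 1
  · rw [Finset.sum_congr rfl (fun p _ => if_congr
      (show ((a:ℕ)+2 = p ∧ (b:ℕ)+2 = p) ↔ (p = (a:ℕ)+2 ∧ (b:ℕ) = (a:ℕ)) by omega) rfl rfl),
      sum_if_icc]
    have ha : (a:ℕ) ≤ k := Nat.lt_succ_iff.mp a.isLt
    rw [if_congr (show ((a:ℕ)+2 ∈ Finset.Icc 2 (k+2) ∧ (b:ℕ) = (a:ℕ)) ↔ ((b:ℕ) = (a:ℕ)) by
      simp [Finset.mem_Icc]; omega) rfl rfl]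
    congr 2
  · rw [Finset.sum_congr rfl (fun p _ => if_congr
      (show ((a:ℕ)+2 = p ∧ (b:ℕ)+2 = p+1) ↔ (p = (a:ℕ)+2 ∧ (b:ℕ) = (a:ℕ)+1) by omega) rfl rfl),
      sum_if_icc]
    have hb : (b:ℕ) ≤ k := Nat.lt_succ_iff.mp b.isLt
    rw [if_congr (show ((a:ℕ)+2 ∈ Finset.Icc 2 (k+1) ∧ (b:ℕ) = (a:ℕ)+1) ↔ ((b:ℕ) = (a:ℕ)+1) by
      simp [Finset.mem_Icc]; omega) rfl rfl]

lemma Hinf_apply (k : ℕ) (a b : Fin (k+1)) :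
    Hinf k a b = Hf (a:ℕ) (b:ℕ) := by
  unfold Hinf Hf
  have ha : (a:ℕ) ≤ k := Nat.lt_succ_iff.mp a.isLt
  have hb : (b:ℕ) ≤ k := Nat.lt_succ_iff.mp b.isLt
  simp only [Matrix.sum_apply, Matrix.add_apply, E, Matrix.of_apply]
  rw [Finset.sum_add_distrib]
  rw [Finset.sum_congr rfl (fun p _ => if_congr
      (show ((a:ℕ)+2 = p ∧ (b:ℕ)+2 = p+1) ↔ (p = (a:ℕ)+2 ∧ (b:ℕ) = (a:ℕ)+1) by omega) rfl rfl),
    sum_if_icc]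
  rw [Finset.sum_congr rfl (fun p _ => if_congr
      (show ((a:ℕ)+2 = p+1 ∧ (b:ℕ)+2 = p) ↔ (p = (b:ℕ)+2 ∧ (a:ℕ) = (b:ℕ)+1) by omega) rfl rfl),
    sum_if_icc]
  simp only [Finset.mem_Icc]
  split_ifs with h1 h2 h3 <;> first | (exfalso; omega) | norm_num

lemma HH_apply (k : ℕ) (q : ℂ) (a b : Fin (k+1)) :
    HH k q a b = HHf k q (a:ℕ) (b:ℕ) := by
  unfold HH HHf
  have ha : (a:ℕ) ≤ k := Nat.lt_succ_iff.mp a.isLt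
  have hb : (b:ℕ) ≤ k := Nat.lt_succ_iff.mp b.isLt
  simp only [Matrix.add_apply, Matrix.sum_apply, Matrix.sub_apply, Matrix.smul_apply, E,
    Matrix.of_apply, smul_eq_mul, mul_ite, mul_one, mul_zero]
  rw [Finset.sum_sub_distrib, Finset.sum_add_distrib]
  rw [Finset.sum_congr rfl (fun p _ => if_congr
      (show ((a:ℕ)+2 = p ∧ (b:ℕ)+2 = p+1) ↔ (p = (a:ℕ)+2 ∧ (b:ℕ) = (a:ℕ)+1) by omega) rfl rfl),
    sum_if_icc]
  rw [Finset.sum_congr rfl (fun p _ => if_congr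
      (show ((a:ℕ)+2 = p+1 ∧ (b:ℕ)+2 = p) ↔ (p = (b:ℕ)+2 ∧ (a:ℕ) = (b:ℕ)+1) by omega) rfl rfl),
    sum_if_icc]
  rw [Finset.sum_congr rfl (fun p hp => if_congr
      (by have := Finset.mem_Icc.mp hp
          show ((a:ℕ)+2 = p ∧ (b:ℕ)+2 = p) ↔ (p = (a:ℕ)+2 ∧ ((b:ℕ) = (a:ℕ) ∧ (a:ℕ) < k))
          omega) rfl rfl),
    sum_if_icc]
  have e1 : (a:ℕ)+2-1 = (a:ℕ)+1 := by omega
  have e2 : (b:ℕ)+2-1 = (b:ℕ)+1 := by omega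
  rw [e1, e2]
  simp only [Finset.mem_Icc]
  split_ifs with h1 h2 h3 h4 h5 h6 h7 h8 h9 h10 <;> first | (exfalso; omega) | ring

lemma key_scalar (k : ℕ) (q : ℂ) (hq : q ≠ 0)
    (hgen : ∀ m : ℕ, 1 ≤ m → m ≤ k + 1 → qnum q m ≠ 0)
    (A B : ℕ) (hA : A ≤ k) (hB : B ≤ k) :
    HHf k q A B * (qnum q (B+1))⁻¹
      - (if B = 0 then 0 else HHf k q A (B-1) * (qnum q (B+1))⁻¹)
    = (qnum q (A+1))⁻¹ * Hf A B
      - (if A = k then 0 else (qnum q (A+2))⁻¹ * Hf (A+1) B) := by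
  have hd : q - q⁻¹ ≠ 0 := by
    intro h; exact hgen 1 le_rfl (by omega) (by simp [qnum, h])
  have qid := qnum_id q hq hd
  have q0 : qnum q 0 = 0 := by simp [qnum]
  unfold HHf Hf
  by_cases c1 : B = A + 1
  · -- superdiagonal
    subst c1
    have hAk : A < k := by omega
    have nA1 := hgen (A+1) (by omega) (by omega)
    have nA2 := hgen (A+2) (by omega) (by omega)
    have qid2 : qnum q (A+2)^2 = qnum q (A+1) * qnum q (A+3) + 1 := by
      have h := qid (A+1)
      rw [show A+1+1 = A+2 by omega, show A+1+2 = A+3 by omega] at h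
      exact h
    simp [show ¬(A+1 = 0) by omega, show ¬(A = A+1) by omega,
      show ¬(A = k) from by omega, show A+1-1 = A by omega,
      show A+1+1 = A+2 by omega, show ¬(A+1 = A+2) by omega,
      show ¬(A = A+2) by omega]
    field_simp
    linear_combination (-1 : ℂ) * qid2
  · by_cases c2 : A = B + 1
    · -- subdiagonal
      subst c2
      have nB1 := hgen (B+1) (by omega) (by omega)
      have nB2 := hgen (B+2) (by omega) (by omega)
      have hmain : qnum q (B+1) / qnum q (B+2) * (qnum q (B+1))⁻¹
          = (qnum q (B+2))⁻¹ := by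
        field_simp
      by_cases cB0 : B = 0
      · subst cB0
        simp [show ¬((0:ℕ) = 2) by omega, show (0:ℕ)+1+1 = 2 by omega,
          show ¬((1:ℕ) = 0) by omega, show (1:ℕ)+1 = 2 by omega,
          show ¬((0:ℕ) = 3) by omega, show ¬((2:ℕ) = 1) by omega]
        simpa using hmain
      · simp [c1, show ¬(B = 0) from cB0, show B-1+1 = B by omega,
          show B-1+2 = B+1 by omega, show ¬(B-1 = B+1+1) by omega,
          show ¬(B+1 = B-1+1) by omega, show ¬(B+1 = B-1) by omega,
          show B+1+1 = B+2 by omega, show B+1+2 = B+3 by omega,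
          show ¬(B = B+2) by omega, show ¬(B = B+3) by omega,
          show ¬(B+2 = B+1) by omega, show ¬(B = B+1) by omega]
        exact hmain
    · by_cases c3 : A = B
      · -- diagonal
        subst c3
        by_cases ck : A = k
        · subst ck
          by_cases ck0 : A = 0
          · subst ck0
            simp [q0]
          · simp [show ¬(A = A+1) by omega, show ¬(A = A+2) by omega,
              show ¬(A = 0) from ck0, show ¬(A-1 = A+1) by omega,
              show (A = A-1+1) ↔ True from iff_of_true (by omega) trivial,
              show A-1+1 = A by omega, show A-1+2 = A+1 by omega,
              show ¬(A+1 = A) by omega, show ¬(A+1 = A+2) by omega]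
        · -- A = B < k
          have nA1 := hgen (A+1) (by omega) (by omega)
          have nA2 := hgen (A+2) (by omega) (by omega)
          by_cases ck0 : A = 0
          · subst ck0
            simp [show ¬((0:ℕ) = 1) by omega, show ¬(0 = k) from ck, q0,
              show ¬((0:ℕ) = 2) by omega, show ¬((1:ℕ) = 2) by omega]
            have e : qnum q 1 ^ 2 = 1 := by simpa [q0] using qid 0
            field_simp
            linear_combination (-1 : ℂ) * e
          · simp [show ¬(A = A+1) by omega, show ¬(A = A+2) by omega,
              show ¬(A = k) from ck, show ¬(A = 0) from ck0,
              show ¬(A-1 = A+1) by omega,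
              show (A = A-1+1) ↔ True from iff_of_true (by omega) trivial,
              show A-1+1 = A by omega, show A-1+2 = A+1 by omega,
              show ¬(A+1 = A) by omega, show ¬(A+1 = A+2) by omega]
            field_simp
            linear_combination qid A
      · -- |A-B| ≥ 2
        by_cases c4 : B = A + 2
        · subst c4
          have nA2 := hgen (A+2) (by omega) (by omega)
          have nA3 := hgen (A+3) (by omega) (by omega)
          simp [c1, c2, c3, show ¬(A+2 = 0) by omega, show A+2-1 = A+1 by omega,
            show ¬(A+2 = A+1) by omega, show ¬(A = A+3) by omega,
            show A+1+1 = A+2 by omega, show A+2+1 = A+3 by omega,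
            show A+1+2 = A+3 by omega, show ¬(A = k) from by omega,
            show ¬(A+1 = A+3) by omega, show ¬(A+2 = A) by omega]
          field_simp
        · have z1 : ¬(B - 1 = A + 1) := by omega
          by_cases cB0 : B = 0
          · subst cB0
            simp [show ¬((0:ℕ) = A+1) by omega, show ¬(A = 0+1) from c2,
              show ¬(A = 0) from c3, show ¬((0:ℕ) = A+1+1) by omega,
              show ¬(A+1 = 0+1) by omega, show ¬(A = 1) by omega]
          · simp [c1, c2, c3, cB0, z1, show ¬(A = B-1+1) by omega,
              show ¬(A = B-1) by omega, show ¬(B = A+1+1) from c4,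
              show ¬(A+1 = B+1) by omega]

lemma key_mul (k : ℕ) (q : ℂ) (hq : q ≠ 0)
    (hgen : ∀ m : ℕ, 1 ≤ m → m ≤ k + 1 → qnum q m ≠ 0) :
    HH k q * Cmat k q = Cmat k q * Hinf k := by
  ext a b
  have ha : (a:ℕ) ≤ k := Nat.lt_succ_iff.mp a.isLt
  have hb : (b:ℕ) ≤ k := Nat.lt_succ_iff.mp b.isLt
  rw [Matrix.mul_apply, Matrix.mul_apply]
  have hL : ∑ c, HH k q a c * Cmat k q c b
      = HHf k q (a:ℕ) (b:ℕ) * (qnum q ((b:ℕ)+1))⁻¹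
        - (if (b:ℕ) = 0 then 0
           else HHf k q (a:ℕ) ((b:ℕ)-1) * (qnum q ((b:ℕ)+1))⁻¹) := by
    simp only [HH_apply, Cmat_apply, mul_sub, mul_ite, mul_zero]
    rw [Finset.sum_sub_distrib]
    congr 1
    · rw [Finset.sum_eq_single b]
      · rw [if_pos rfl]
      · intro c _ hc
        exact if_neg (fun h => hc (Fin.ext h.symm))
      · intro h; exact absurd (Finset.mem_univ b) h
    · by_cases hb0 : (b:ℕ) = 0
      · rw [if_pos hb0, Finset.sum_eq_zero]
        intro c _
        exact if_neg (by omega)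
      · rw [if_neg hb0, Finset.sum_eq_single (⟨(b:ℕ)-1, by omega⟩ : Fin (k+1))]
        · rw [if_pos (by simp; omega)]
          simp only []
          rw [show ((b:ℕ)-1)+2 = (b:ℕ)+1 by omega]
        · intro c _ hc
          refine if_neg (fun h => hc (Fin.ext ?_))
          simp only []
          omega
        · intro h; exact absurd (Finset.mem_univ _) h
  have hR : ∑ c, Cmat k q a c * Hinf k c b
      = (qnum q ((a:ℕ)+1))⁻¹ * Hf (a:ℕ) (b:ℕ)
        - (if (a:ℕ) = k then 0
           else (qnum q ((a:ℕ)+2))⁻¹ * Hf ((a:ℕ)+1) (b:ℕ)) := by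
    simp only [Hinf_apply, Cmat_apply, sub_mul, ite_mul, zero_mul]
    rw [Finset.sum_sub_distrib]
    congr 1
    · rw [Finset.sum_eq_single a]
      · rw [if_pos rfl]
      · intro c _ hc
        exact if_neg (fun h => hc (Fin.ext h))
      · intro h; exact absurd (Finset.mem_univ a) h
    · by_cases hak : (a:ℕ) = k
      · rw [if_pos hak, Finset.sum_eq_zero]
        intro c _
        have : (c:ℕ) ≤ k := Nat.lt_succ_iff.mp c.isLt
        exact if_neg (by omega)
      · rw [if_neg hak, Finset.sum_eq_single (⟨(a:ℕ)+1, by omega⟩ : Fin (k+1))]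
        · rw [if_pos rfl]
        · intro c _ hc
          refine if_neg (fun h => hc (Fin.ext ?_))
          simp only []
          omega
        · intro h; exact absurd (Finset.mem_univ _) h
  rw [hL, hR]
  exact key_scalar k q hq hgen (a:ℕ) (b:ℕ) ha hb

/-- `C(q)` is invertible, so `H_{(k,1)}(q)` is similar to `H^∞`; in particular the
spectrum of `H_{(k,1)}(q)` coincides with that of `H^∞` and is independent of `q`. -/
theorem HH_similar (k : ℕ) (q : ℂ) (hq : q ≠ 0)
    (hgen : ∀ m : ℕ, 1 ≤ m → m ≤ k + 1 → qnum q m ≠ 0) :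
    IsUnit (Cmat k q) ∧
    HH k q = Cmat k q * Hinf k * (Cmat k q)⁻¹ ∧
    spectrum ℂ (HH k q) = spectrum ℂ (Hinf k) := by
    classical
  have htri : (Cmat k q).BlockTriangular id := by
    intro i j hlt
    have h : (j:ℕ) < (i:ℕ) := hlt
    rw [Cmat_apply, if_neg (by omega), if_neg (by omega), sub_zero]
  have hdet : IsUnit (Cmat k q).det := by
    rw [Matrix.det_of_upperTriangular htri, isUnit_iff_ne_zero]
    apply Finset.prod_ne_zero_iff.mpr
    intro i _
    have hi : (i:ℕ) ≤ k := Nat.lt_succ_iff.mp i.isLt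
    rw [Cmat_apply, if_pos rfl, if_neg (by omega), sub_zero]
    exact inv_ne_zero (hgen _ (by omega) (by omega))
  have hC : IsUnit (Cmat k q) := (Matrix.isUnit_iff_isUnit_det _).mpr hdet
  have hkey := key_mul k q hq hgen
  have hsim : HH k q = Cmat k q * Hinf k * (Cmat k q)⁻¹ := by
    have h2 : HH k q * Cmat k q * (Cmat k q)⁻¹ = Cmat k q * Hinf k * (Cmat k q)⁻¹ := by
      rw [hkey]
    rwa [mul_assoc, Matrix.mul_nonsing_inv _ hdet, mul_one] at h2
  refine ⟨hC, hsim, ?_⟩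
  have hspec := spectrum.units_conjugate (R := ℂ) (a := Hinf k) (u := hC.unit)
  rw [Matrix.coe_units_inv, IsUnit.unit_spec] at hspec
  rw [hsim]
  exact hspec
end

section
/- The assignment σ_p ↦ q^{1-l} A_l (ρ_{(k+l-1,1)}(σ_p)^{⊗l}) A_l defines a representation of the Hecke algebra H_{k+l+1} on the l-th exterior power Λ^l V of V = V_{(k+l-1,1)}: the images satisfy the braid relations, locality, and the Hecke quadratic relation x^2 = (q-q^{-1})x + 1 on Λ^l V. -/
open Finset Matrix

/-- The antisymmetrizer `A_l` on `V^{⊗l}` (with `dim V = n`), written in the basis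
`v_f = v_{f 0} ⊗ ⋯ ⊗ v_{f (l-1)}`:
`A_l(v_g) = (1/l!) Σ_{s ∈ S_l} sgn(s) v_{g∘s}`. -/
noncomputable def Al (n l : ℕ) : Matrix (Fin l → Fin n) (Fin l → Fin n) ℂ :=
  Matrix.of fun f g =>
    ((l.factorial : ℂ))⁻¹ *
      ∑ s : Equiv.Perm (Fin l), ((Equiv.Perm.sign s : ℤ) : ℂ) * (if f = g ∘ s then 1 else 0)

/-- The operator `M^{(m)} = 1^{⊗(m-1)} ⊗ M ⊗ 1^{⊗(l-m)}` acting on the `m`-th factor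
of `V^{⊗l}`. -/
noncomputable def Skron (n l : ℕ) (M : Matrix (Fin n) (Fin n) ℂ) (m : Fin l) :
    Matrix (Fin l → Fin n) (Fin l → Fin n) ℂ :=
  Matrix.of fun f g => ∏ j, if j = m then M (f j) (g j) else (if f j = g j then (1 : ℂ) else 0)

/-- The `l`-fold tensor (Kronecker) power `M^{⊗l}` acting on `V^{⊗l}`. -/
noncomputable def Tpow (n l : ℕ) (M : Matrix (Fin n) (Fin n) ℂ) :
    Matrix (Fin l → Fin n) (Fin l → Fin n) ℂ :=
  Matrix.of fun f g => ∏ j, M (f j) (g j)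

/-- The image of the generator `σ_p` under the wedge-power construction:
`T(p) = q^{1-l} A_l (ρ_{(k+l-1,1)}(σ_p))^{⊗l} A_l`, acting on `V^{⊗l}` (it vanishes on the
complement of `Λ^l V = Im A_l` and preserves `Λ^l V`). -/
noncomputable def Trep (k l : ℕ) (q : ℂ) (p : ℕ) :
    Matrix (Fin l → Fin (k+l-1+1)) (Fin l → Fin (k+l-1+1)) ℂ :=
  q ^ (1 - (l : ℤ)) • (Al (k+l-1+1) l * Tpow (k+l-1+1) l (rho (k+l-1) q p) * Al (k+l-1+1) l)


namespace Wedge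
variable (n l : ℕ)

/-- slot permutation matrix -/
def Pmat (s : Equiv.Perm (Fin l)) : Matrix (Fin l → Fin n) (Fin l → Fin n) ℂ :=
  Matrix.of fun f g => if f = g ∘ s then 1 else 0

lemma Pmat_mul_apply (s : Equiv.Perm (Fin l)) (M : Matrix (Fin l → Fin n) (Fin l → Fin n) ℂ)
    (f g : Fin l → Fin n) : (Pmat n l s * M) f g = M (f ∘ ⇑s⁻¹) g := by
  rw [mul_apply]
  rw [Finset.sum_eq_single (f ∘ ⇑s⁻¹)]
  · simp [Pmat]
    intro h
    exfalso; apply h; ext j; simp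
  · intro b _ hb
    simp [Pmat]
    intro h
    exfalso; apply hb; rw [h]; ext j; simp
  · simp

lemma mul_Pmat_apply (s : Equiv.Perm (Fin l)) (M : Matrix (Fin l → Fin n) (Fin l → Fin n) ℂ)
    (f g : Fin l → Fin n) : (M * Pmat n l s) f g = M f (g ∘ ⇑s) := by
  rw [mul_apply]
  rw [Finset.sum_eq_single (g ∘ ⇑s)]
  · simp [Pmat]
  · intro b _ hb
    simp [Pmat]
    intro h; exact absurd h hb
  · simp [Pmat]

lemma Al_eq : Al n l = (l.factorial : ℂ)⁻¹ •
    ∑ s : Equiv.Perm (Fin l), ((Equiv.Perm.sign s : ℤ) : ℂ) • Pmat n l s := by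
  ext f g
  simp [Al, Pmat, Matrix.sum_apply, Finset.mul_sum, mul_comm]

lemma sign_sq (l : ℕ) (s : Equiv.Perm (Fin l)) :
    ((Equiv.Perm.sign s : ℤ) : ℂ) * ((Equiv.Perm.sign s : ℤ) : ℂ) = 1 := by
  rcases Int.units_eq_one_or (Equiv.Perm.sign s) with h | h <;> rw [h] <;> norm_num

lemma Al_mul_Pmat (s : Equiv.Perm (Fin l)) :
    Al n l * Pmat n l s = ((Equiv.Perm.sign s : ℤ) : ℂ) • Al n l := by
  ext f g
  rw [mul_Pmat_apply]
  simp only [Al, Matrix.of_apply, Matrix.smul_apply, smul_eq_mul]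
  have hsum : (∑ t : Equiv.Perm (Fin l), ((Equiv.Perm.sign t : ℤ) : ℂ) * (if f = (g ∘ ⇑s) ∘ ⇑t then 1 else 0))
      = ((Equiv.Perm.sign s : ℤ) : ℂ) * ∑ t : Equiv.Perm (Fin l), ((Equiv.Perm.sign t : ℤ) : ℂ) * (if f = g ∘ ⇑t then 1 else 0) := by
    calc (∑ t : Equiv.Perm (Fin l), ((Equiv.Perm.sign t : ℤ) : ℂ) * (if f = (g ∘ ⇑s) ∘ ⇑t then 1 else 0))
        = ∑ t : Equiv.Perm (Fin l), ((Equiv.Perm.sign s : ℤ) : ℂ) *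
            (fun u : Equiv.Perm (Fin l) => ((Equiv.Perm.sign u : ℤ) : ℂ) * (if f = g ∘ ⇑u then 1 else 0)) ((Equiv.mulLeft s) t) := by
          apply Finset.sum_congr rfl
          intro t _
          simp only [Equiv.coe_mulLeft]
          have hc2 : g ∘ ⇑(s * t) = (g ∘ ⇑s) ∘ ⇑t := by rw [Equiv.Perm.coe_mul]; rfl
          simp only [hc2]
          rw [← mul_assoc]
          congr 1
          simp only [Equiv.Perm.sign_mul]
          push_cast
          rw [← mul_assoc, sign_sq, one_mul]
      _ = ((Equiv.Perm.sign s : ℤ) : ℂ) * ∑ t : Equiv.Perm (Fin l),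
            (fun u : Equiv.Perm (Fin l) => ((Equiv.Perm.sign u : ℤ) : ℂ) * (if f = g ∘ ⇑u then 1 else 0)) ((Equiv.mulLeft s) t) := by
          rw [Finset.mul_sum]
      _ = _ := by
          rw [Equiv.sum_comp (Equiv.mulLeft s)
            (fun u : Equiv.Perm (Fin l) => ((Equiv.Perm.sign u : ℤ) : ℂ) * (if f = g ∘ ⇑u then 1 else 0))]
  rw [hsum]
  ring

lemma Pmat_mul_Al (s : Equiv.Perm (Fin l)) :
    Pmat n l s * Al n l = ((Equiv.Perm.sign s : ℤ) : ℂ) • Al n l := by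
  ext f g
  rw [Pmat_mul_apply]
  simp only [Al, Matrix.of_apply, Matrix.smul_apply, smul_eq_mul]
  have hsum : (∑ t : Equiv.Perm (Fin l), ((Equiv.Perm.sign t : ℤ) : ℂ) * (if f ∘ ⇑s⁻¹ = g ∘ ⇑t then 1 else 0))
      = ((Equiv.Perm.sign s : ℤ) : ℂ) * ∑ t : Equiv.Perm (Fin l), ((Equiv.Perm.sign t : ℤ) : ℂ) * (if f = g ∘ ⇑t then 1 else 0) := by
    calc (∑ t : Equiv.Perm (Fin l), ((Equiv.Perm.sign t : ℤ) : ℂ) * (if f ∘ ⇑s⁻¹ = g ∘ ⇑t then 1 else 0))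
        = ∑ t : Equiv.Perm (Fin l), ((Equiv.Perm.sign s : ℤ) : ℂ) *
            (fun u : Equiv.Perm (Fin l) => ((Equiv.Perm.sign u : ℤ) : ℂ) * (if f = g ∘ ⇑u then 1 else 0)) ((Equiv.mulRight s) t) := by
          apply Finset.sum_congr rfl
          intro t _
          simp only [Equiv.coe_mulRight]
          have hiff : f ∘ ⇑s⁻¹ = g ∘ ⇑t ↔ f = g ∘ ⇑(t * s) := by
            constructor
            · intro h; ext j
              have := congrFun h (s j)
              simp only [Function.comp_apply, Equiv.Perm.inv_def, Equiv.symm_apply_apply] at this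
              simp [this, Equiv.Perm.coe_mul]
            · intro h; ext j
              have := congrFun h (s⁻¹ j)
              simp only [Function.comp_apply, Equiv.Perm.coe_mul, Equiv.Perm.inv_def, Equiv.apply_symm_apply] at this
              simp [this]
          rw [if_congr hiff rfl rfl, ← mul_assoc]
          congr 1
          simp only [Equiv.Perm.sign_mul]
          push_cast
          rw [mul_comm ((Equiv.Perm.sign t : ℤ) : ℂ), ← mul_assoc, sign_sq, one_mul]
      _ = ((Equiv.Perm.sign s : ℤ) : ℂ) * ∑ t : Equiv.Perm (Fin l),
            (fun u : Equiv.Perm (Fin l) => ((Equiv.Perm.sign u : ℤ) : ℂ) * (if f = g ∘ ⇑u then 1 else 0)) ((Equiv.mulRight s) t) := by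
          rw [Finset.mul_sum]
      _ = _ := by
          rw [Equiv.sum_comp (Equiv.mulRight s)
            (fun u : Equiv.Perm (Fin l) => ((Equiv.Perm.sign u : ℤ) : ℂ) * (if f = g ∘ ⇑u then 1 else 0))]
  rw [hsum]
  ring

lemma Al_mul_Al : Al n l * Al n l = Al n l := by
  nth_rewrite 2 [Al_eq]
  rw [Matrix.mul_smul, Finset.mul_sum]
  have : ∀ s : Equiv.Perm (Fin l), Al n l * (((Equiv.Perm.sign s : ℤ) : ℂ) • Pmat n l s)
      = Al n l := by
    intro s
    rw [Matrix.mul_smul, Al_mul_Pmat, smul_smul]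
    rw [sign_sq, one_smul]
  rw [Finset.sum_congr rfl (fun s _ => this s)]
  rw [Finset.sum_const, Finset.card_univ]
  rw [Fintype.card_perm, Fintype.card_fin]
  rw [← Nat.cast_smul_eq_nsmul ℂ, smul_smul,
    inv_mul_cancel₀ (by exact_mod_cast Nat.factorial_ne_zero l), one_smul]

lemma Tpow_mul (M N : Matrix (Fin n) (Fin n) ℂ) :
    Tpow n l (M * N) = Tpow n l M * Tpow n l N := by
  ext f g
  rw [mul_apply]
  simp only [Tpow, Matrix.of_apply, mul_apply]
  rw [Finset.prod_univ_sum]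
  rw [Fintype.piFinset_univ]
  apply Finset.sum_congr rfl
  intro h _
  rw [Finset.prod_mul_distrib]

lemma Pmat_mul_Tpow (s : Equiv.Perm (Fin l)) (M : Matrix (Fin n) (Fin n) ℂ) :
    Pmat n l s * Tpow n l M = Tpow n l M * Pmat n l s := by
  ext f g
  rw [Pmat_mul_apply, mul_Pmat_apply]
  simp only [Tpow, Matrix.of_apply]
  simp only [Function.comp_apply]
  rw [← Equiv.prod_comp s (fun j' => M (f (s⁻¹ j')) (g j'))]
  apply Finset.prod_congr rfl
  intro j _
  rw [Equiv.Perm.inv_def, Equiv.symm_apply_apply]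

lemma Al_mul_Tpow (M : Matrix (Fin n) (Fin n) ℂ) :
    Al n l * Tpow n l M = Tpow n l M * Al n l := by
  rw [Al_eq, Matrix.smul_mul, Matrix.mul_smul, Finset.sum_mul, Finset.mul_sum]
  congr 1
  apply Finset.sum_congr rfl
  intro s _
  rw [Matrix.smul_mul, Matrix.mul_smul, Pmat_mul_Tpow]

lemma collapse (M : Matrix (Fin n) (Fin n) ℂ) :
    Al n l * Tpow n l M * Al n l = Al n l * Tpow n l M := by
  rw [Al_mul_Tpow, Matrix.mul_assoc, Al_mul_Al]

lemma AT_mul_AT (M N : Matrix (Fin n) (Fin n) ℂ) :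
    (Al n l * Tpow n l M) * (Al n l * Tpow n l N) = Al n l * Tpow n l (M * N) := by
  rw [Tpow_mul]
  simp only [← Matrix.mul_assoc]
  rw [collapse]

variable (u v : Fin n → ℂ)

/-- `NS S` has `u⊗v` rank-one blocks on slots in `S` and identity elsewhere. -/
def NS (S : Finset (Fin l)) : Matrix (Fin l → Fin n) (Fin l → Fin n) ℂ :=
  Matrix.of fun f g => ∏ j, if j ∈ S then u (f j) * v (g j) else (if f j = g j then (1 : ℂ) else 0)

lemma NS_empty : NS n l u v ∅ = 1 := by
  ext f g
  simp only [NS, Matrix.of_apply, Finset.notMem_empty, if_false, Matrix.one_apply]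
  by_cases h : f = g
  · subst h; simp
  · rw [if_neg h]
    obtain ⟨j0, hj0⟩ : ∃ j, f j ≠ g j := by
      by_contra hc
      push_neg at hc
      exact h (funext hc)
    exact Finset.prod_eq_zero (Finset.mem_univ j0) (by rw [if_neg hj0])

lemma NS_singleton (m : Fin l) : NS n l u v {m} = Skron n l (vecMulVec u v) m := by
  ext f g
  simp [NS, Skron, vecMulVec, Finset.mem_singleton]

lemma Tpow_expand (α β : ℂ) :
    Tpow n l (α • 1 + β • vecMulVec u v)
      = ∑ S : Finset (Fin l), (α ^ (l - S.card) * β ^ S.card) • NS n l u v S := by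
  ext f g
  have hentry : ∀ a b : Fin n, (α • 1 + β • vecMulVec u v) a b
      = β * (u a * v b) + α * (if a = b then (1:ℂ) else 0) := by
    intro a b
    by_cases h : a = b <;>
      simp [Matrix.add_apply, Matrix.smul_apply, Matrix.one_apply, vecMulVec, smul_eq_mul, h] <;>
      ring
  simp only [Tpow, Matrix.of_apply]
  rw [Finset.prod_congr rfl (fun j _ => hentry (f j) (g j))]
  rw [Finset.prod_add]
  rw [Matrix.sum_apply]
  rw [show (Finset.univ : Finset (Fin l)).powerset = Finset.univ from Finset.powerset_univ]
  apply Finset.sum_congr rfl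
  intro S _
  rw [Matrix.smul_apply, smul_eq_mul]
  simp only [NS, Matrix.of_apply]
  have hR : (∏ j, if j ∈ S then u (f j) * v (g j) else (if f j = g j then (1:ℂ) else 0))
      = (∏ j ∈ S, u (f j) * v (g j)) * ∏ j ∈ Finset.univ \ S, (if f j = g j then (1:ℂ) else 0) := by
    rw [Finset.prod_ite]
    congr 1
    · apply Finset.prod_congr _ (fun j _ => rfl)
      ext j; simp
    · apply Finset.prod_congr _ (fun j _ => rfl)
      ext j; simp
  rw [hR]
  rw [show (∏ i ∈ Finset.univ \ S, (α * if f i = g i then (1:ℂ) else 0))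
      = α ^ (l - S.card) * ∏ i ∈ Finset.univ \ S, (if f i = g i then (1:ℂ) else 0) from by
    rw [Finset.prod_mul_distrib, Finset.prod_const,
      Finset.card_sdiff_of_subset (Finset.subset_univ S), Finset.card_univ, Fintype.card_fin]]
  have hb : (∏ x ∈ S, (β * (u (f x) * v (g x)))) = β ^ S.card * ∏ x ∈ S, (u (f x) * v (g x)) := by
    rw [Finset.prod_mul_distrib, Finset.prod_const]
  rw [hb]
  ring

/-- diagonal part -/
def Dg (S : Finset (Fin l)) : Matrix (Fin l → Fin n) (Fin l → Fin n) ℂ :=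
  Matrix.diagonal fun f => ∏ j ∈ S, u (f j)

/-- the `v`-and-identity part -/
def Km (S : Finset (Fin l)) : Matrix (Fin l → Fin n) (Fin l → Fin n) ℂ :=
  Matrix.of fun f g => ∏ j, if j ∈ S then v (g j) else (if f j = g j then (1 : ℂ) else 0)

lemma NS_factor (S : Finset (Fin l)) : NS n l u v S = Dg n l u S * Km n l v S := by
  ext f g
  simp only [Dg]
  rw [Matrix.diagonal_mul]
  simp only [NS, Km, Matrix.of_apply]
  rw [show (∏ j ∈ S, u (f j)) = ∏ j, (if j ∈ S then u (f j) else 1) by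
    rw [Finset.prod_ite_mem, Finset.univ_inter]]
  rw [← Finset.prod_mul_distrib]
  apply Finset.prod_congr rfl
  intro j _
  by_cases h : j ∈ S <;> simp [h]

lemma Pmat_swap_mul_Km (S' : Finset (Fin l)) (m m' : Fin l) (hm : m ∈ S') (hm' : m' ∈ S') :
    Pmat n l (Equiv.swap m m') * Km n l v S' = Km n l v S' := by
  ext f g
  rw [Pmat_mul_apply]
  simp only [Km, Matrix.of_apply]
  apply Finset.prod_congr rfl
  intro j _
  by_cases h : j ∈ S'
  · rw [if_pos h, if_pos h]
  · rw [if_neg h, if_neg h]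
    have hj : (Equiv.swap m m')⁻¹ j = j := by
      rw [Equiv.swap_inv]
      exact Equiv.swap_apply_of_ne_of_ne (fun hh => h (hh ▸ hm)) (fun hh => h (hh ▸ hm'))
    rw [Function.comp_apply, hj]

lemma prod_swap_reindex (S' : Finset (Fin l)) (m m' : Fin l) (hm : m ∈ S') (hm' : m' ∈ S')
    (w : Fin l → ℂ) :
    (∏ j ∈ S', w ((Equiv.swap m m') j)) = ∏ j ∈ S', w j := by
  have hmem : ∀ a ∈ S', (Equiv.swap m m') a ∈ S' := by
    intro a ha
    by_cases h1 : a = m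
    · subst h1; rwa [Equiv.swap_apply_left]
    by_cases h2 : a = m'
    · subst h2; rwa [Equiv.swap_apply_right]
    · rwa [Equiv.swap_apply_of_ne_of_ne h1 h2]
  exact Finset.prod_nbij' (fun j => (Equiv.swap m m') j) (fun j => (Equiv.swap m m') j)
    hmem hmem (fun a _ => Equiv.swap_apply_self m m' a) (fun a _ => Equiv.swap_apply_self m m' a)
    (fun a _ => rfl)

lemma Dg_mul_Pmat_swap (S' : Finset (Fin l)) (m m' : Fin l) (hm : m ∈ S') (hm' : m' ∈ S') :
    Dg n l u S' * Pmat n l (Equiv.swap m m') = Pmat n l (Equiv.swap m m') * Dg n l u S' := by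
  ext f g
  rw [mul_Pmat_apply, Pmat_mul_apply]
  simp only [Dg, Matrix.diagonal_apply]
  by_cases h : f = g ∘ ⇑(Equiv.swap m m')
  · have h' : f ∘ ⇑(Equiv.swap m m')⁻¹ = g := by
      rw [Equiv.swap_inv]
      ext j
      rw [Function.comp_apply, h, Function.comp_apply, Equiv.swap_apply_self]
    rw [if_pos h, if_pos h', h]
    simp only [Function.comp_apply, Equiv.Perm.inv_def, Equiv.apply_symm_apply]
    exact prod_swap_reindex l S' m m' hm hm' (fun j => u (g j))
  · have h' : ¬ (f ∘ ⇑(Equiv.swap m m')⁻¹ = g) := by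
      intro hc
      apply h
      rw [← hc, Equiv.swap_inv]
      ext j
      simp [Equiv.swap_apply_self]
    rw [if_neg h, if_neg h']

lemma Al_mul_NS_eq_zero (S' : Finset (Fin l)) (hS : 2 ≤ S'.card) :
    Al n l * NS n l u v S' = 0 := by
  obtain ⟨m, hm, m', hm', hmm⟩ := Finset.one_lt_card.mp hS
  set τ := Equiv.swap m m' with hτ
  have key : Al n l * NS n l u v S' = -(Al n l * NS n l u v S') := by
    conv_lhs => rw [NS_factor, ← Pmat_swap_mul_Km n l v S' m m' hm hm']
    calc Al n l * (Dg n l u S' * (Pmat n l τ * Km n l v S'))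
        = Al n l * ((Dg n l u S' * Pmat n l τ) * Km n l v S') := by rw [Matrix.mul_assoc]
      _ = Al n l * ((Pmat n l τ * Dg n l u S') * Km n l v S') := by
          rw [Dg_mul_Pmat_swap n l u S' m m' hm hm']
      _ = (Al n l * Pmat n l τ) * (Dg n l u S' * Km n l v S') := by
          simp only [← Matrix.mul_assoc]
      _ = (((Equiv.Perm.sign τ : ℤ) : ℂ) • Al n l) * (Dg n l u S' * Km n l v S') := by
          rw [Al_mul_Pmat]
      _ = -(Al n l * NS n l u v S') := by
          rw [hτ, Equiv.Perm.sign_swap hmm]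
          rw [NS_factor n l u v S']
          push_cast
          rw [neg_one_smul, Matrix.neg_mul]
  have h2 : (2:ℂ) • (Al n l * NS n l u v S') = 0 := by
    rw [two_smul]
    nth_rewrite 1 [key]
    rw [neg_add_cancel]
  have := smul_eq_zero.mp h2
  rcases this with h | h
  · norm_num at h
  · exact h

lemma Al_Skron_Al_swap (N : Matrix (Fin n) (Fin n) ℂ) (m m0 : Fin l) :
    Al n l * Skron n l N m * Al n l = Al n l * Skron n l N m0 * Al n l := by
  set σ := Equiv.swap m0 m with hσ
  have hswap : Pmat n l σ * Skron n l N m * Pmat n l σ = Skron n l N m0 := by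
    ext f g
    rw [Matrix.mul_assoc, Pmat_mul_apply, mul_Pmat_apply]
    simp only [Skron, Matrix.of_apply]
    have hinv : ⇑σ⁻¹ = ⇑σ := by rw [hσ, Equiv.swap_inv]
    rw [hinv]
    calc (∏ j, if j = m then N ((f ∘ ⇑σ) j) ((g ∘ ⇑σ) j)
            else if (f ∘ ⇑σ) j = (g ∘ ⇑σ) j then (1:ℂ) else 0)
        = ∏ j, (fun j' => if j' = σ m then N (f j') (g j')
            else if f j' = g j' then (1:ℂ) else 0) (σ j) := by
          apply Finset.prod_congr rfl
          intro j _
          simp only [Function.comp_apply]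
          exact (if_congr (Equiv.apply_eq_iff_eq σ) rfl rfl).symm
      _ = ∏ j, if j = σ m then N (f j) (g j) else if f j = g j then (1:ℂ) else 0 := by
          rw [Equiv.prod_comp σ (fun j' => if j' = σ m then N (f j') (g j')
            else if f j' = g j' then (1:ℂ) else 0)]
      _ = ∏ j, if j = m0 then N (f j) (g j) else if f j = g j then (1:ℂ) else 0 := by
          rw [hσ, Equiv.swap_apply_right]
  calc Al n l * Skron n l N m * Al n l
      = (((Equiv.Perm.sign σ : ℤ) : ℂ) * ((Equiv.Perm.sign σ : ℤ) : ℂ)) •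
          (Al n l * Skron n l N m * Al n l) := by rw [sign_sq, one_smul]
    _ = (Al n l * Pmat n l σ) * Skron n l N m * (Pmat n l σ * Al n l) := by
        rw [Al_mul_Pmat, Pmat_mul_Al, Matrix.smul_mul, Matrix.mul_smul, Matrix.smul_mul,
          smul_smul]
    _ = Al n l * (Pmat n l σ * Skron n l N m * Pmat n l σ) * Al n l := by
        simp only [Matrix.mul_assoc]
    _ = Al n l * Skron n l N m0 * Al n l := by rw [hswap]

lemma sandwich (m0 : Fin l) (α β : ℂ) :
    Al n l * Tpow n l (α • 1 + β • vecMulVec u v) * Al n l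
      = α ^ l • Al n l + ((l : ℂ) * α ^ (l-1) * β) •
          (Al n l * Skron n l (vecMulVec u v) m0 * Al n l) := by
  rw [Tpow_expand]
  rw [Finset.mul_sum, Finset.sum_mul]
  have hterm : ∀ S : Finset (Fin l),
      Al n l * ((α ^ (l - S.card) * β ^ S.card) • NS n l u v S) * Al n l
        = (α ^ (l - S.card) * β ^ S.card) • (Al n l * NS n l u v S * Al n l) := by
    intro S
    rw [Matrix.mul_smul, Matrix.smul_mul]
  rw [Finset.sum_congr rfl (fun S _ => hterm S)]
  set F : Finset (Fin l) → Matrix (Fin l → Fin n) (Fin l → Fin n) ℂ :=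
    fun S => (α ^ (l - S.card) * β ^ S.card) • (Al n l * NS n l u v S * Al n l) with hF
  have hBsub : (insert ∅ (Finset.univ.image fun m : Fin l => ({m} : Finset (Fin l)))) ⊆
      Finset.univ := Finset.subset_univ _
  rw [show (∑ S : Finset (Fin l), F S) = ∑ S ∈ insert ∅ (Finset.univ.image fun m : Fin l => ({m} : Finset (Fin l))), F S by
    symm
    apply Finset.sum_subset hBsub
    intro S _ hS
    simp only [Finset.mem_insert, Finset.mem_image, Finset.mem_univ, true_and] at hS
    push_neg at hS
    obtain ⟨hS1, hS2⟩ := hS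
    have hcard : 2 ≤ S.card := by
      by_contra hc
      push_neg at hc
      have hc' : S.card = 0 ∨ S.card = 1 := by omega
      rcases hc' with h | h
      · exact (Finset.nonempty_iff_ne_empty.mp hS1) (Finset.card_eq_zero.mp h)
      · obtain ⟨a, ha⟩ := Finset.card_eq_one.mp h
        exact hS2 a ha.symm
    rw [hF]
    simp only
    rw [Al_mul_NS_eq_zero n l u v S hcard, Matrix.zero_mul, smul_zero]]
  rw [Finset.sum_insert (by simp)]
  rw [Finset.sum_image (fun a _ b _ h => Finset.singleton_injective h)]
  have h1 : F ∅ = α ^ l • Al n l := by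
    rw [hF]
    simp only [Finset.card_empty, pow_zero, mul_one, Nat.sub_zero]
    rw [NS_empty, Matrix.mul_one, Al_mul_Al]
  have h2 : ∀ m : Fin l, F {m} = (α ^ (l-1) * β) •
      (Al n l * Skron n l (vecMulVec u v) m0 * Al n l) := by
    intro m
    rw [hF]
    simp only [Finset.card_singleton, pow_one]
    rw [NS_singleton, Al_Skron_Al_swap n l (vecMulVec u v) m m0]
  rw [h1, Finset.sum_congr rfl (fun m _ => h2 m), Finset.sum_const, Finset.card_univ,
    Fintype.card_fin]
  congr 1
  rw [← Nat.cast_smul_eq_nsmul ℂ, smul_smul]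
  ring_nf


end Wedge

section RhoLemmas

lemma qnum_zero (q : ℂ) : qnum q 0 = 0 := by simp [qnum]

lemma vecMulVec_mulR {m : ℕ} (u v u' v' : Fin m → ℂ) :
    vecMulVec u v * vecMulVec u' v' = (v ⬝ᵥ u') • vecMulVec u v' := by
  ext a b
  simp only [mul_apply, vecMulVec_apply, Matrix.smul_apply, dotProduct, smul_eq_mul,
    Finset.sum_mul]
  apply Finset.sum_congr rfl
  intro c _
  ring

/-- value vector -/
noncomputable def uvec (k : ℕ) (q : ℂ) (p : ℕ) : Fin (k+1) → ℂ := fun a =>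
  if (a:ℕ)+2 = p then -(qnum q (p-1) / qnum q p)
  else if (a:ℕ)+2 = p+1 then qnum q (p+1) / qnum q p else 0

def vvec (k p : ℕ) : Fin (k+1) → ℂ := fun b =>
  if (b:ℕ)+2 = p then 1 else if (b:ℕ)+2 = p+1 then -1 else 0

set_option maxHeartbeats 1200000 in
lemma rho_eq (k : ℕ) (q : ℂ) (p : ℕ) :
    rho k q p = q • 1 + vecMulVec (uvec k q p) (vvec k p) := by
  ext a b
  simp only [rho, Matrix.add_apply, Matrix.smul_apply, Matrix.sub_apply, Matrix.of_apply, E,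
    vecMulVec_apply, Matrix.one_apply, smul_eq_mul, uvec, vvec, Fin.ext_iff]
  split_ifs <;> first | ring1 | (exfalso; omega)

lemma sum_delta (k c : ℕ) (x : ℂ) :
    (∑ b : Fin (k+1), if (b:ℕ)+2 = c then x else 0) = if 2 ≤ c ∧ c ≤ k+2 then x else 0 := by
  by_cases h : 2 ≤ c ∧ c ≤ k+2
  · rw [if_pos h]
    rw [Finset.sum_eq_single (⟨c-2, by omega⟩ : Fin (k+1))]
    · rw [if_pos]; simp; omega
    · intro b _ hb
      rw [if_neg]
      intro hc
      apply hb
      apply Fin.ext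
      simp
      omega
    · intro hc; exact absurd (Finset.mem_univ _) hc
  · rw [if_neg h]
    apply Finset.sum_eq_zero
    intro b _
    rw [if_neg]
    omega

lemma dot_vu_self (k : ℕ) (q : ℂ) (p : ℕ) (h1 : 1 ≤ p) (h2 : p ≤ k+1) :
    vvec k p ⬝ᵥ uvec k q p = -(qnum q (p-1) / qnum q p + qnum q (p+1) / qnum q p) := by
  unfold dotProduct
  have hpt : ∀ b : Fin (k+1), vvec k p b * uvec k q p b
      = (if (b:ℕ)+2 = p then -(qnum q (p-1) / qnum q p) else 0)
        + (if (b:ℕ)+2 = p+1 then -(qnum q (p+1) / qnum q p) else 0) := by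
    intro b
    simp only [uvec, vvec]
    split_ifs <;> first | ring1 | (exfalso; omega)
  rw [Finset.sum_congr rfl (fun b _ => hpt b), Finset.sum_add_distrib, sum_delta, sum_delta]
  rw [if_pos (by omega : 2 ≤ p+1 ∧ p+1 ≤ k+2)]
  by_cases hp : 2 ≤ p
  · rw [if_pos (by omega : 2 ≤ p ∧ p ≤ k+2)]
    ring
  · have hp1 : p = 1 := by omega
    subst hp1
    rw [if_neg (by omega)]
    simp [qnum_zero]

lemma dot_vu_succ (k : ℕ) (q : ℂ) (p : ℕ) (h1 : 1 ≤ p) (h2 : p+1 ≤ k+1) :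
    vvec k p ⬝ᵥ uvec k q (p+1) = qnum q p / qnum q (p+1) := by
  unfold dotProduct
  have hpt : ∀ b : Fin (k+1), vvec k p b * uvec k q (p+1) b
      = (if (b:ℕ)+2 = p+1 then qnum q ((p+1)-1) / qnum q (p+1) else 0) := by
    intro b
    simp only [uvec, vvec]
    split_ifs <;> first | ring1 | (exfalso; omega)
  rw [Finset.sum_congr rfl (fun b _ => hpt b), sum_delta]
  rw [if_pos (by omega : 2 ≤ p+1 ∧ p+1 ≤ k+2)]
  simp

lemma dot_vu_pred (k : ℕ) (q : ℂ) (p : ℕ) (h1 : 1 ≤ p) (h2 : p+1 ≤ k+1) :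
    vvec k (p+1) ⬝ᵥ uvec k q p = qnum q (p+1) / qnum q p := by
  unfold dotProduct
  have hpt : ∀ b : Fin (k+1), vvec k (p+1) b * uvec k q p b
      = (if (b:ℕ)+2 = p+1 then qnum q (p+1) / qnum q p else 0) := by
    intro b
    simp only [uvec, vvec]
    split_ifs <;> first | ring1 | (exfalso; omega)
  rw [Finset.sum_congr rfl (fun b _ => hpt b), sum_delta]
  rw [if_pos (by omega : 2 ≤ p+1 ∧ p+1 ≤ k+2)]

lemma dot_vu_far (k : ℕ) (q : ℂ) (p r : ℕ) (h : p+1 < r ∨ r+1 < p) :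
    vvec k p ⬝ᵥ uvec k q r = 0 := by
  unfold dotProduct
  apply Finset.sum_eq_zero
  intro b _
  simp only [uvec, vvec]
  split_ifs <;> first | ring1 | (exfalso; omega)

lemma qd_ne (q : ℂ) (h1 : qnum q 1 ≠ 0) : q - q⁻¹ ≠ 0 := by
  intro h
  apply h1
  simp [qnum, h]

lemma qnum_rec (q : ℂ) (hq : q ≠ 0) (hd : q - q⁻¹ ≠ 0) (m : ℕ) :
    qnum q m + qnum q (m+2) = (q + q⁻¹) * qnum q (m+1) := by
  unfold qnum
  rw [← add_div, ← mul_div_assoc]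
  congr 1
  have h : q * q⁻¹ = 1 := mul_inv_cancel₀ hq
  ring_nf
  linear_combination (q⁻¹ ^ m - q ^ m) * h

lemma ab_sum (q : ℂ) (hq : q ≠ 0) (hd : q - q⁻¹ ≠ 0) (p : ℕ) (hp : 1 ≤ p)
    (hnp : qnum q p ≠ 0) :
    qnum q (p-1) / qnum q p + qnum q (p+1) / qnum q p = q + q⁻¹ := by
  obtain ⟨m, rfl⟩ : ∃ m, p = m+1 := ⟨p-1, by omega⟩
  simp only [Nat.add_sub_cancel]
  rw [← add_div, show m+1+1 = m+2 from rfl, qnum_rec q hq hd m, mul_div_assoc,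
    div_self hnp, mul_one]

lemma ab_prod (q : ℂ) (p : ℕ) (h1 : qnum q p ≠ 0) (h2 : qnum q (p+1) ≠ 0) :
    (qnum q p / qnum q (p+1)) * (qnum q (p+1) / qnum q p) = 1 := by
  field_simp

end RhoLemmas


section RhoRel

variable (k : ℕ) (q : ℂ)

lemma expand2 (X Y : Matrix (Fin (k+1)) (Fin (k+1)) ℂ) :
    (q•1+X)*(q•1+Y) = (q*q)•1 + q•X + q•Y + X*Y := by
  simp only [add_mul, mul_add, smul_mul_assoc, mul_smul_comm, one_mul, mul_one, smul_smul]
  module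

lemma expand3 (X Y : Matrix (Fin (k+1)) (Fin (k+1)) ℂ) :
    (q•1+X)*(q•1+Y)*(q•1+X) = (q*q*q)•1 + (q*q)•X + (q*q)•Y + (q*q)•X
      + q•(X*Y) + q•(Y*X) + q•(X*X) + X*Y*X := by
  simp only [add_mul, mul_add, smul_mul_assoc, mul_smul_comm, one_mul, mul_one, smul_smul]
  module

lemma rho_quad (hq : q ≠ 0) (hd : q - q⁻¹ ≠ 0) (p : ℕ) (hp1 : 1 ≤ p)
    (hp2 : p ≤ k+1) (hnp : qnum q p ≠ 0) :
    rho k q p * rho k q p = (q*q) • (1 : Matrix (Fin (k+1)) (Fin (k+1)) ℂ)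
      + (q - q⁻¹) • vecMulVec (uvec k q p) (vvec k p) := by
  rw [rho_eq]
  have hNN : vecMulVec (uvec k q p) (vvec k p) * vecMulVec (uvec k q p) (vvec k p)
      = (-(q + q⁻¹)) • vecMulVec (uvec k q p) (vvec k p) := by
    rw [vecMulVec_mulR, dot_vu_self k q p hp1 hp2, ab_sum q hq hd p hp1 hnp]
  rw [expand2, hNN]
  module

lemma rho_braid (hq : q ≠ 0) (hd : q - q⁻¹ ≠ 0) (p : ℕ) (hp1 : 1 ≤ p)
    (hp2 : p+1 ≤ k+1) (hnp : qnum q p ≠ 0) (hnp1 : qnum q (p+1) ≠ 0) :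
    rho k q p * rho k q (p+1) * rho k q p = rho k q (p+1) * rho k q p * rho k q (p+1) := by
  rw [rho_eq k q p, rho_eq k q (p+1)]
  set N1 := vecMulVec (uvec k q p) (vvec k p) with hN1
  set N2 := vecMulVec (uvec k q (p+1)) (vvec k (p+1)) with hN2
  have h11 : N1 * N1 = (-(q + q⁻¹)) • N1 := by
    rw [hN1, vecMulVec_mulR, dot_vu_self k q p hp1 (by omega), ab_sum q hq hd p hp1 hnp]
  have h22 : N2 * N2 = (-(q + q⁻¹)) • N2 := by
    rw [hN2, vecMulVec_mulR, dot_vu_self k q (p+1) (by omega) hp2,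
      ab_sum q hq hd (p+1) (by omega) hnp1]
  have h121 : N1 * N2 * N1 = N1 := by
    rw [hN1, hN2, vecMulVec_mulR, dot_vu_succ k q p hp1 hp2, Matrix.smul_mul,
      vecMulVec_mulR, dot_vu_pred k q p hp1 hp2, smul_smul, ab_prod q p hnp hnp1, one_smul]
  have h212 : N2 * N1 * N2 = N2 := by
    rw [hN1, hN2, vecMulVec_mulR, dot_vu_pred k q p hp1 hp2, Matrix.smul_mul,
      vecMulVec_mulR, dot_vu_succ k q p hp1 hp2, smul_smul,
      mul_comm (qnum q (p+1) / qnum q p), ab_prod q p hnp hnp1, one_smul]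
  rw [expand3, expand3, h11, h22, h121, h212]
  match_scalars <;> (field_simp; try ring)

lemma rho_comm (p r : ℕ) (h : p + 1 < r) :
    rho k q p * rho k q r = rho k q r * rho k q p := by
  rw [rho_eq k q p, rho_eq k q r]
  have h12 : vecMulVec (uvec k q p) (vvec k p) * vecMulVec (uvec k q r) (vvec k r)
      = 0 := by
    rw [vecMulVec_mulR, dot_vu_far k q p r (Or.inl h), zero_smul]
  have h21 : vecMulVec (uvec k q r) (vvec k r) * vecMulVec (uvec k q p) (vvec k p)
      = 0 := by
    rw [vecMulVec_mulR, dot_vu_far k q r p (Or.inr h), zero_smul]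
  rw [expand2, expand2, h12, h21]
  module

end RhoRel

section Assembly

lemma Trep_mul2 (k l : ℕ) (q : ℂ) (p r : ℕ) :
    Trep k l q p * Trep k l q r
      = (q ^ (1 - (l:ℤ)) * q ^ (1 - (l:ℤ))) •
          (Al (k+l-1+1) l * Tpow (k+l-1+1) l (rho (k+l-1) q p * rho (k+l-1) q r)
            * Al (k+l-1+1) l) := by
  unfold Trep
  rw [Matrix.smul_mul, Matrix.mul_smul, smul_smul, Wedge.collapse, Wedge.collapse,
    Wedge.AT_mul_AT, Wedge.collapse]

lemma Trep_mul3 (k l : ℕ) (q : ℂ) (p r t : ℕ) :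
    Trep k l q p * Trep k l q r * Trep k l q t
      = (q ^ (1 - (l:ℤ)) * q ^ (1 - (l:ℤ)) * q ^ (1 - (l:ℤ))) •
          (Al (k+l-1+1) l *
            Tpow (k+l-1+1) l (rho (k+l-1) q p * rho (k+l-1) q r * rho (k+l-1) q t)
            * Al (k+l-1+1) l) := by
  rw [Trep_mul2]
  unfold Trep
  rw [Matrix.smul_mul, Matrix.mul_smul, smul_smul, Wedge.collapse, Wedge.collapse,
    Wedge.AT_mul_AT, Wedge.collapse]


/-- `σ_p ↦ q^{1-l} A_l ρ_{(k+l-1,1)}(σ_p)^{⊗l} A_l` defines a representation of the Hecke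
algebra `H_{k+l+1}` on `Λ^l V = Im A_l`: the images satisfy the braid relations, locality,
and the Hecke relation `x² = (q-q⁻¹) x + 1` on `Λ^l V` (the identity of `Λ^l V` being the
projector `A_l`). -/
theorem wedge_power_representation (k l : ℕ) (hl : 1 ≤ l) (q : ℂ) (hq : q ≠ 0)
    (hgen : ∀ m : ℕ, 1 ≤ m → m ≤ k + l → qnum q m ≠ 0) :
    (∀ p, 1 ≤ p → p + 1 ≤ k + l →
      Trep k l q p * Trep k l q (p+1) * Trep k l q p
        = Trep k l q (p+1) * Trep k l q p * Trep k l q (p+1)) ∧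
    (∀ p r, 1 ≤ p → p ≤ k + l → 1 ≤ r → r ≤ k + l → p + 1 < r →
      Trep k l q p * Trep k l q r = Trep k l q r * Trep k l q p) ∧
    (∀ p, 1 ≤ p → p ≤ k + l →
      Trep k l q p * Trep k l q p = (q - q⁻¹) • Trep k l q p + Al (k+l-1+1) l) := by
  have hd : q - q⁻¹ ≠ 0 := qd_ne q (hgen 1 le_rfl (by omega))
  refine ⟨?_, ?_, ?_⟩
  · -- braid
    intro p hp1 hp2
    rw [Trep_mul3, Trep_mul3,
      rho_braid (k+l-1) q hq hd p hp1 (by omega) (hgen p hp1 (by omega)) (hgen (p+1) (by omega) hp2)]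
  · -- locality
    intro p r hp1 hp2 hr1 hr2 hpr
    rw [Trep_mul2, Trep_mul2, rho_comm (k+l-1) q p r hpr]
  · -- Hecke relation
    intro p hp1 hp2
    have hnp : qnum q p ≠ 0 := hgen p hp1 hp2
    set K := k + l - 1 with hK
    set n := K + 1 with hn
    set m0 : Fin l := ⟨0, hl⟩ with hm0
    set u := uvec K q p with hu
    set v := vvec K p with hv
    set G := Al n l * Skron n l (vecMulVec u v) m0 * Al n l with hG
    have hquad := rho_quad K q hq hd p hp1 (by omega) hnp
    have hrw1 : Trep k l q p * Trep k l q p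
        = (q ^ (1 - (l:ℤ)) * q ^ (1 - (l:ℤ))) •
            (((q*q) ^ l) • Al n l + ((l : ℂ) * (q*q) ^ (l-1) * (q - q⁻¹)) • G) := by
      rw [Trep_mul2, hquad]
      rw [Wedge.sandwich n l u v m0 (q*q) (q - q⁻¹)]
    have hrw2 : Trep k l q p
        = q ^ (1 - (l:ℤ)) • ((q ^ l) • Al n l + ((l : ℂ) * q ^ (l-1) * 1) • G) := by
      unfold Trep
      rw [rho_eq K q p, show vecMulVec u v = (1:ℂ) • vecMulVec u v from (one_smul ℂ _).symm]
      rw [Wedge.sandwich n l u v m0 q 1]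
    rw [hrw1, hrw2]
    have hc : q ^ (1 - (l:ℤ)) = q * (q ^ l)⁻¹ := by
      rw [zpow_sub₀ hq, zpow_one, zpow_natCast, div_eq_mul_inv]
    have hql : q ^ l = q ^ (l-1) * q := by
      rw [← pow_succ]
      congr 1
      omega
    have hqlne : (q : ℂ) ^ l ≠ 0 := pow_ne_zero _ hq
    have hql1ne : (q : ℂ) ^ (l-1) ≠ 0 := pow_ne_zero _ hq
    match_scalars <;>
      (rw [hc, mul_pow]; field_simp; (try rw [hql]); try ring)
end Assembly
end
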